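/- Let N ≥ 1, let α ∈ (0,1), and let T : ℝ^N → ℝ^N be an α-averaged operator with Fix T ≠ ∅. Let (γ_k)_{k≥0} be a real sequence with 0 ≤ γ_k ≤ (1−α)/α for all k. Then for any x₀ ∈ ℝ^N, the sequence defined by the alternated-inertia iterations x_{k+1} = T(x_k) when k is even and x_{k+1} = T(x_k + γ_k·(x_k − x_{k−1})) when k is odd, converges to a point of Fix T. -/

import Mathlib

open Filter Topology

/-- `T` is an `α`-averaged operator on `ℝ^N` (Euclidean norm). -/
def IsAveragedOp {N : ℕ} (α : ℝ)
    (T : EuclideanSpace ℝ (Fin N) → EuclideanSpace ℝ (Fin N)) : Prop :=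
  ∀ x y : EuclideanSpace ℝ (Fin N),
    ‖T x - T y‖ ^ 2 + ((1 - α) / α) * ‖(x - T x) - (y - T y)‖ ^ 2 ≤ ‖x - y‖ ^ 2

lemma aux_id {E : Type*} [NormedAddCommGroup E] [InnerProductSpace ℝ E] (p q : E) (c : ℝ) :
    ‖p + c • (p - q)‖ ^ 2 = (1 + c) * ‖p‖ ^ 2 - c * ‖q‖ ^ 2 + c * (1 + c) * ‖p - q‖ ^ 2 := by
  have h1 := norm_add_sq_real p (c • (p - q))
  have h2 := norm_sub_sq_real p q
  have h3 : inner ℝ p (c • (p - q)) = c * (inner ℝ p p - inner ℝ p q : ℝ) := by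
    rw [real_inner_smul_right, inner_sub_right]
  have h4 : ‖c • (p - q)‖ ^ 2 = c ^ 2 * ‖p - q‖ ^ 2 := by
    rw [norm_smul]; simp [mul_pow]
  have h5 : (inner ℝ p p : ℝ) = ‖p‖ ^ 2 := real_inner_self_eq_norm_sq p
  rw [h1, h3, h4, h5, h2]; ring

set_option maxHeartbeats 1000000 in
/-- Alternated inertia: `x_{k+1} = T x_k` for even `k` and
`x_{k+1} = T(x_k + γ_k (x_k − x_{k−1}))` for odd `k`, with `0 ≤ γ_k ≤ (1−α)/α`,
converges to a fixed point. -/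
theorem stmt_4 {N : ℕ} (hN : 1 ≤ N) {α : ℝ} (hα : α ∈ Set.Ioo (0 : ℝ) 1)
    (T : EuclideanSpace ℝ (Fin N) → EuclideanSpace ℝ (Fin N))
    (hT : IsAveragedOp α T) (hfix : ∃ z, T z = z)
    (γ : ℕ → ℝ) (hγ : ∀ k, 0 ≤ γ k ∧ γ k ≤ (1 - α) / α)
    (x₀ : EuclideanSpace ℝ (Fin N)) (x : ℕ → EuclideanSpace ℝ (Fin N))
    (hx0 : x 0 = x₀)
    (heven : ∀ k, Even k → x (k + 1) = T (x k))
    (hodd : ∀ k, ¬ Even k → x (k + 1) = T (x k + γ k • (x k - x (k - 1)))) :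
    ∃ xbar, T xbar = xbar ∧ Tendsto x atTop (𝓝 xbar) := by
  obtain ⟨z, hz⟩ := hfix
  set β : ℝ := (1 - α) / α with hβdef
  have hβ : 0 < β := div_pos (by linarith [hα.2]) hα.1
  -- contraction wrt any fixed point
  have hcon : ∀ w, T w = w → ∀ v, ‖T v - w‖ ^ 2 + β * ‖v - T v‖ ^ 2 ≤ ‖v - w‖ ^ 2 := by
    intro w hw v
    have := hT v w
    rw [hw] at this
    simpa using this
  -- nonexpansive
  have hnx : ∀ a b, ‖T a - T b‖ ≤ ‖a - b‖ := by
    intro a b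
    have h := hT a b
    have h2 : ‖T a - T b‖ ^ 2 ≤ ‖a - b‖ ^ 2 := by
      nlinarith [sq_nonneg ‖(a - T a) - (b - T b)‖, hβ.le]
    nlinarith [norm_nonneg (T a - T b), norm_nonneg (a - b)]
  have hTcont : Continuous T := by
    have : LipschitzWith 1 T := by
      refine LipschitzWith.of_dist_le_mul fun a b => ?_
      simpa [dist_eq_norm] using hnx a b
    exact this.continuous
  -- structure of the iteration
  have hA : ∀ j, x (2 * j + 1) = T (x (2 * j)) := fun j =>
    heven (2 * j) (even_two_mul j)
  set y : ℕ → EuclideanSpace ℝ (Fin N) :=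
    fun j => x (2 * j + 1) + γ (2 * j + 1) • (x (2 * j + 1) - x (2 * j)) with hy
  have hB : ∀ j, x (2 * j + 2) = T (y j) := by
    intro j
    have hne : ¬ Even (2 * j + 1) := by simp [parity_simps]
    have := hodd (2 * j + 1) hne
    simpa [hy] using this
  -- key per-pair inequality
  have key : ∀ w, T w = w → ∀ j,
      ‖x (2 * j + 2) - w‖ ^ 2 + β * ‖y j - x (2 * j + 2)‖ ^ 2 ≤ ‖x (2 * j) - w‖ ^ 2 := by
    intro w hw j
    set a := x (2 * j) with ha
    set b := x (2 * j + 1) with hb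
    set c := γ (2 * j + 1) with hc
    obtain ⟨hc0, hcβ⟩ := hγ (2 * j + 1)
    have i1 : ‖b - w‖ ^ 2 + β * ‖a - b‖ ^ 2 ≤ ‖a - w‖ ^ 2 := by
      have := hcon w hw a
      rwa [← hA j, ← hb] at this
    have i2 : ‖T (y j) - w‖ ^ 2 + β * ‖y j - T (y j)‖ ^ 2 ≤ ‖y j - w‖ ^ 2 := hcon w hw (y j)
    have hid : ‖y j - w‖ ^ 2 =
        (1 + c) * ‖b - w‖ ^ 2 - c * ‖a - w‖ ^ 2 + c * (1 + c) * ‖b - a‖ ^ 2 := by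
      have hrw : y j - w = (b - w) + c • ((b - w) - (a - w)) := by
        rw [sub_sub_sub_cancel_right]
        simp only [hy]
        rw [← hb, ← ha, ← hc]
        abel
      rw [hrw, aux_id, sub_sub_sub_cancel_right]
    have hba : ‖b - a‖ = ‖a - b‖ := norm_sub_rev b a
    rw [← hB j] at i2
    rw [hid, hba] at i2
    have hpos : (0:ℝ) ≤ (1 + c) * (β - c) * ‖a - b‖ ^ 2 :=
      mul_nonneg (mul_nonneg (by linarith) (by rw [hβdef]; linarith)) (sq_nonneg _)
    nlinarith [mul_le_mul_of_nonneg_left i1 (by linarith : (0:ℝ) ≤ 1 + c)]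
  -- Fejér monotonicity of the even subsequence
  have mono : ∀ w, T w = w → ∀ j, ‖x (2 * (j+1)) - w‖ ≤ ‖x (2 * j) - w‖ := by
    intro w hw j
    have h := key w hw j
    have h2 : ‖x (2 * j + 2) - w‖ ^ 2 ≤ ‖x (2 * j) - w‖ ^ 2 := by
      nlinarith [sq_nonneg ‖y j - x (2 * j + 2)‖, hβ.le]
    have : 2 * (j + 1) = 2 * j + 2 := by ring
    rw [this]
    nlinarith [norm_nonneg (x (2 * j + 2) - w), norm_nonneg (x (2 * j) - w)]
  have anti : ∀ w, T w = w → Antitone fun j => ‖x (2 * j) - w‖ :=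
    fun w hw => antitone_nat_of_succ_le (mono w hw)
  -- the sequence of squared distances to z converges
  have sq_anti : Antitone fun j => ‖x (2 * j) - z‖ ^ 2 := by
    intro i j hij
    have := anti z hz hij
    exact pow_le_pow_left₀ (norm_nonneg _) this 2
  have sq_bdd : BddBelow (Set.range fun j => ‖x (2 * j) - z‖ ^ 2) :=
    ⟨0, by rintro _ ⟨j, rfl⟩; positivity⟩
  obtain ⟨L, sq_tend⟩ : ∃ L, Tendsto (fun j => ‖x (2 * j) - z‖ ^ 2) atTop (𝓝 L) :=
    ⟨_, tendsto_atTop_ciInf sq_anti sq_bdd⟩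
  -- r j → 0
  have hrt : Tendsto (fun j => ‖y j - x (2 * j + 2)‖) atTop (𝓝 0) := by
    have hdiff : Tendsto (fun j => ‖x (2 * j) - z‖ ^ 2 - ‖x (2 * (j+1)) - z‖ ^ 2) atTop (𝓝 0) := by
      have h2 : Tendsto (fun j => ‖x (2 * (j+1)) - z‖ ^ 2) atTop (𝓝 L) :=
        (tendsto_add_atTop_iff_nat 1).2 sq_tend
      simpa using sq_tend.sub h2
    have hsq : Tendsto (fun j => ‖y j - x (2 * j + 2)‖ ^ 2) atTop (𝓝 0) := by
      have hub : ∀ j, ‖y j - x (2 * j + 2)‖ ^ 2 ≤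
          β⁻¹ * (‖x (2 * j) - z‖ ^ 2 - ‖x (2 * (j+1)) - z‖ ^ 2) := by
        intro j
        have h := key z hz j
        have h2 : β * ‖y j - x (2 * j + 2)‖ ^ 2 ≤
            ‖x (2 * j) - z‖ ^ 2 - ‖x (2 * (j+1)) - z‖ ^ 2 := by
          have : 2 * (j + 1) = 2 * j + 2 := by ring
          rw [this]
          nlinarith [sq_nonneg ‖x (2 * j + 2) - z‖]
        rw [← mul_le_mul_iff_right₀ hβ, mul_inv_cancel_left₀ hβ.ne']
        exact h2
      have hlb : ∀ j, (0:ℝ) ≤ ‖y j - x (2 * j + 2)‖ ^ 2 := fun j => sq_nonneg _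
      have := hdiff.const_mul β⁻¹
      rw [mul_zero] at this
      exact squeeze_zero hlb hub this
    have : Tendsto (fun j => Real.sqrt (‖y j - x (2 * j + 2)‖ ^ 2)) atTop (𝓝 (Real.sqrt 0)) :=
      (Real.continuous_sqrt.tendsto 0).comp hsq
    simpa [Real.sqrt_sq (norm_nonneg _)] using this
  -- residual at even points → 0
  have hres : Tendsto (fun j => ‖x (2 * j) - T (x (2 * j))‖) atTop (𝓝 0) := by
    rw [← tendsto_add_atTop_iff_nat 1]
    have hub : ∀ j, ‖x (2 * (j+1)) - T (x (2 * (j+1)))‖ ≤ ‖y j - x (2 * j + 2)‖ := by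
      intro j
      have h1 : x (2 * (j+1)) = T (y j) := by
        have : 2 * (j+1) = 2 * j + 2 := by ring
        rw [this]; exact hB j
      have h2 := hnx (y j) (T (y j))
      calc ‖x (2 * (j+1)) - T (x (2 * (j+1)))‖ = ‖T (y j) - T (T (y j))‖ := by rw [h1]
        _ ≤ ‖y j - T (y j)‖ := h2
        _ = ‖y j - x (2 * j + 2)‖ := by rw [hB j]
    exact squeeze_zero (fun j => norm_nonneg _) hub hrt
  -- compactness: extract a convergent subsequence of the even iterates
  have hball : ∀ j, x (2 * j) ∈ Metric.closedBall z ‖x 0 - z‖ := by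
    intro j
    have h := anti z hz (Nat.zero_le j)
    simp only [Metric.mem_closedBall, dist_eq_norm]
    simpa using h
  obtain ⟨xbar, -, φ, hφ, hφt⟩ :=
    (isCompact_closedBall z ‖x 0 - z‖).tendsto_subseq hball
  -- xbar is a fixed point
  have hfixbar : T xbar = xbar := by
    have h1 : Tendsto (fun i => ‖x (2 * φ i) - T (x (2 * φ i))‖) atTop
        (𝓝 ‖xbar - T xbar‖) := by
      have : Tendsto (fun i => x (2 * φ i) - T (x (2 * φ i))) atTop (𝓝 (xbar - T xbar)) :=
        hφt.sub ((hTcont.tendsto xbar).comp hφt)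
      exact (continuous_norm.tendsto _).comp this
    have h2 : Tendsto (fun i => ‖x (2 * φ i) - T (x (2 * φ i))‖) atTop (𝓝 0) :=
      hres.comp hφ.tendsto_atTop
    have h3 := tendsto_nhds_unique h1 h2
    rw [norm_eq_zero, sub_eq_zero] at h3
    exact h3.symm
  refine ⟨xbar, hfixbar, ?_⟩
  -- even subsequence converges to xbar
  have heconv : Tendsto (fun j => x (2 * j)) atTop (𝓝 xbar) := by
    rw [Metric.tendsto_atTop]
    intro ε hε
    obtain ⟨I, hI⟩ := (Metric.tendsto_atTop.1 hφt) ε hε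
    refine ⟨φ I, fun j hj => ?_⟩
    have h2 : ‖x (2 * j) - xbar‖ ≤ ‖x (2 * φ I) - xbar‖ := anti xbar hfixbar hj
    calc dist (x (2 * j)) xbar = ‖x (2 * j) - xbar‖ := dist_eq_norm _ _
      _ ≤ ‖x (2 * φ I) - xbar‖ := h2
      _ = dist (x (2 * φ I)) xbar := (dist_eq_norm _ _).symm
      _ < ε := hI I le_rfl
  -- odd subsequence converges to xbar
  have hoconv : Tendsto (fun j => x (2 * j + 1)) atTop (𝓝 xbar) := by
    have : Tendsto (fun j => T (x (2 * j))) atTop (𝓝 (T xbar)) :=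
      (hTcont.tendsto xbar).comp heconv
    rw [hfixbar] at this
    exact this.congr fun j => (hA j).symm
  -- combine
  rw [Metric.tendsto_atTop]
  intro ε hε
  rw [Metric.tendsto_atTop] at heconv hoconv
  obtain ⟨J1, hJ1⟩ := heconv ε hε
  obtain ⟨J2, hJ2⟩ := hoconv ε hε
  refine ⟨2 * (max J1 J2) + 1, fun n hn => ?_⟩
  have hhalf : max J1 J2 ≤ n / 2 := by omega
  rcases Nat.even_or_odd n with ⟨m, hm⟩ | ⟨m, hm⟩
  · have hnm : n = 2 * m := by omega
    have hm' : J1 ≤ m := by omega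
    rw [hnm]; exact hJ1 m hm'
  · have hm' : J2 ≤ m := by omega
    rw [hm]; exact hJ2 m hm'
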